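/- The perspective of the log-det mutual-information function is jointly concave: for a fixed complex matrix H ∈ ℂ^{m×n}, the function (t,Q) ↦ t·log₂ Re(det(I + (1/t)·H Q Hᴴ)) is concave on the convex set {(t,Q) : t > 0, Q ∈ ℂ^{n×n} positive semidefinite}, regarded as a subset of ℝ × (Hermitian n×n matrices). -/

import Mathlib

open Matrix
open scoped ComplexOrder

section PerspectiveLogDetAux

open scoped MatrixOrder

private lemma pld_trace_eq_sum_eig {m : ℕ} {A : Matrix (Fin m) (Fin m) ℂ} (hA : A.IsHermitian) :
    A.trace = ∑ i, (hA.eigenvalues i : ℂ) := by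
  nth_rewrite 1 [hA.spectral_theorem]
  rw [Unitary.conjStarAlgAut_apply]
  rw [Matrix.trace_mul_cycle]
  have h1 : (star (hA.eigenvectorUnitary : Matrix (Fin m) (Fin m) ℂ)) *
      (hA.eigenvectorUnitary : Matrix (Fin m) (Fin m) ℂ) = 1 := by
    exact_mod_cast Unitary.coe_star_mul_self hA.eigenvectorUnitary
  rw [h1, Matrix.one_mul, Matrix.trace_diagonal]
  rfl

private lemma pld_key_ineq {m : ℕ} {A : Matrix (Fin m) (Fin m) ℂ} (hA : A.PosDef) :
    (m : ℝ) + Real.log A.det.re ≤ A.trace.re := by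
  have h := hA.isHermitian
  have hdre : A.det.re = ∏ i, h.eigenvalues i := by
    rw [h.det_eq_prod_eigenvalues]; norm_cast
  have htre : A.trace.re = ∑ i, h.eigenvalues i := by
    rw [pld_trace_eq_sum_eig h]; norm_cast
  rw [hdre, htre, Real.log_prod (fun i _ => (hA.eigenvalues_pos i).ne')]
  have hle : ∀ i : Fin m, 1 + Real.log (h.eigenvalues i) ≤ h.eigenvalues i := fun i => by
    have := Real.log_le_sub_one_of_pos (hA.eigenvalues_pos i)
    linarith
  calc (m : ℝ) + ∑ i, Real.log (h.eigenvalues i)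
      = ∑ i : Fin m, (1 + Real.log (h.eigenvalues i)) := by
        rw [Finset.sum_add_distrib, Finset.sum_const, Finset.card_univ]
        simp
    _ ≤ ∑ i, h.eigenvalues i := Finset.sum_le_sum fun i _ => hle i

private lemma pld_psd_real_smul {n : ℕ} {A : Matrix (Fin n) (Fin n) ℂ} (hA : A.PosSemidef)
    {r : ℝ} (hr : 0 ≤ r) : (r • A).PosSemidef := by
  refine Matrix.PosSemidef.of_dotProduct_mulVec_nonneg ?_ ?_
  · have : (r • A)ᴴ = r • Aᴴ := by
      ext i j; simp [Matrix.conjTranspose_apply, Complex.real_smul]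
    rw [Matrix.IsHermitian, this, hA.1.eq]
  · intro x
    have hconv : r • A = ((r : ℂ)) • A := by ext i j; simp [Complex.real_smul]
    have : star x ⬝ᵥ ((r • A) *ᵥ x) = (r : ℂ) * (star x ⬝ᵥ (A *ᵥ x)) := by
      rw [hconv, Matrix.smul_mulVec, dotProduct_smul, smul_eq_mul]
    rw [this]
    exact mul_nonneg (by exact_mod_cast hr) (hA.dotProduct_mulVec_nonneg x)

private lemma pld_posdef_conj_sqrt {m : ℕ} {S X : Matrix (Fin m) (Fin m) ℂ} (hS : S.PosDef)
    (hX : X.PosDef) : (CFC.sqrt S * X * CFC.sqrt S).PosDef := by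
  set R := CFC.sqrt S with hRdef
  have hR : R.PosSemidef := (CFC.sqrt_nonneg S).posSemidef
  have hRR : R * R = S := CFC.sqrt_mul_sqrt_self S hS.posSemidef.nonneg
  have hdetS : S.det ≠ 0 := hS.det_pos.ne'
  have hdetR : R.det ≠ 0 := by
    intro h0
    apply hdetS
    rw [← hRR, Matrix.det_mul, h0, mul_zero]
  have hRunit : IsUnit R := (Matrix.isUnit_iff_isUnit_det R).2 (isUnit_iff_ne_zero.2 hdetR)
  refine Matrix.PosDef.of_dotProduct_mulVec_pos ?_ ?_
  · show (R * X * R)ᴴ = R * X * R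
    rw [Matrix.conjTranspose_mul, Matrix.conjTranspose_mul, hR.1.eq, hX.1.eq, Matrix.mul_assoc]
  · intro x hx
    have hRx : R *ᵥ x ≠ 0 := by
      intro h0
      exact hx ((Matrix.mulVec_injective_iff_isUnit.2 hRunit) (by simpa using h0))
    have : star x ⬝ᵥ ((R * X * R) *ᵥ x) = star (R *ᵥ x) ⬝ᵥ (X *ᵥ (R *ᵥ x)) := by
      rw [← Matrix.mulVec_mulVec, ← Matrix.mulVec_mulVec, Matrix.dotProduct_mulVec (star x) R,
        Matrix.star_mulVec, hR.1.eq]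
    rw [this]
    exact hX.dotProduct_mulVec_pos hRx

private lemma pld_det_re_pos {m : ℕ} {A : Matrix (Fin m) (Fin m) ℂ} (hA : A.PosDef) :
    0 < A.det.re := by
  have := hA.det_pos
  rw [Complex.lt_def] at this
  simpa using this.1

private lemma pld_det_im_zero {m : ℕ} {A : Matrix (Fin m) (Fin m) ℂ} (hA : A.PosDef) :
    A.det.im = 0 := by
  have := hA.det_pos
  rw [Complex.lt_def] at this
  simpa using this.2.symm

private lemma pld_logdet_le {m : ℕ} {S X : Matrix (Fin m) (Fin m) ℂ} (hS : S.PosDef)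
    (hX : X.PosDef) :
    Real.log X.det.re ≤ (S * X).trace.re - Real.log S.det.re - m := by
  set R := CFC.sqrt S with hRdef
  have hRR : R * R = S := CFC.sqrt_mul_sqrt_self S hS.posSemidef.nonneg
  have hY : (R * X * R).PosDef := pld_posdef_conj_sqrt hS hX
  have htr : (S * X).trace = (R * X * R).trace := by
    rw [← hRR, Matrix.mul_assoc, Matrix.trace_mul_comm, Matrix.mul_assoc]
  have hdetY : (R * X * R).det = S.det * X.det := by
    rw [Matrix.det_mul, Matrix.det_mul, ← hRR, Matrix.det_mul]
    ring
  have hdetYre : (R * X * R).det.re = S.det.re * X.det.re := by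
    rw [hdetY, Complex.mul_re, pld_det_im_zero hS, pld_det_im_zero hX]
    ring
  have hk := pld_key_ineq hY
  rw [hdetYre, Real.log_mul (pld_det_re_pos hS).ne' (pld_det_re_pos hX).ne'] at hk
  rw [htr]
  linarith

/-- The matrix `1 + t⁻¹ • (H Q Hᴴ)` is positive definite. -/
private lemma pld_X_posdef {m n : ℕ} (H : Matrix (Fin m) (Fin n) ℂ) {t : ℝ} (ht : 0 < t)
    {Q : Matrix (Fin n) (Fin n) ℂ} (hQ : Q.PosSemidef) :
    ((1 : Matrix (Fin m) (Fin m) ℂ) + t⁻¹ • (H * Q * Hᴴ)).PosDef :=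
  Matrix.PosDef.add_posSemidef Matrix.PosDef.one
    (pld_psd_real_smul (hQ.mul_mul_conjTranspose_same H) (inv_nonneg.2 ht.le))

/-- trace of `S * (1 + t⁻¹ • A)`, real part. -/
private lemma pld_trace_decomp {m : ℕ} (S A : Matrix (Fin m) (Fin m) ℂ) (t : ℝ) :
    (S * ((1 : Matrix (Fin m) (Fin m) ℂ) + t⁻¹ • A)).trace.re =
      S.trace.re + t⁻¹ * (S * A).trace.re := by
  have h1 : S * ((1 : Matrix (Fin m) (Fin m) ℂ) + t⁻¹ • A) = S + t⁻¹ • (S * A) := by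
    rw [Matrix.mul_add, Matrix.mul_one, Matrix.mul_smul]
  rw [h1, Matrix.trace_add, Matrix.trace_smul, Complex.add_re]
  congr 1
  rw [Complex.real_smul, Complex.re_ofReal_mul]

/-- The basic per-point inequality with natural log. -/
private lemma pld_point_ineq {m n : ℕ} (H : Matrix (Fin m) (Fin n) ℂ) {t : ℝ} (ht : 0 < t)
    {Q : Matrix (Fin n) (Fin n) ℂ} (hQ : Q.PosSemidef)
    {S : Matrix (Fin m) (Fin m) ℂ} (hS : S.PosDef) :
    t * Real.log (((1 : Matrix (Fin m) (Fin m) ℂ) + t⁻¹ • (H * Q * Hᴴ)).det.re) ≤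
      t * S.trace.re + (S * (H * Q * Hᴴ)).trace.re - t * Real.log S.det.re - t * m := by
  set A := H * Q * Hᴴ with hAdef
  set X := (1 : Matrix (Fin m) (Fin m) ℂ) + t⁻¹ • A with hXdef
  have hX : X.PosDef := pld_X_posdef H ht hQ
  have hlog := pld_logdet_le hS hX
  rw [hXdef, pld_trace_decomp S A t] at hlog
  have h2 := mul_le_mul_of_nonneg_left hlog ht.le
  have h3 : t * (S.trace.re + t⁻¹ * (S * A).trace.re - Real.log S.det.re - ↑m) =
      t * S.trace.re + (S * A).trace.re - t * Real.log S.det.re - t * m := by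
    field_simp
  rw [h3] at h2
  exact h2

private lemma pld_arith {a b t1 t2 t0 u1 u2 u0 c : ℝ} (hc : 0 ≤ c)
    (h : a * (t1 * u1) + b * (t2 * u2) ≤ t0 * u0) :
    a * (t1 * (u1 * c)) + b * (t2 * (u2 * c)) ≤ t0 * (u0 * c) := by
  have e1 : a * (t1 * (u1 * c)) + b * (t2 * (u2 * c)) = (a * (t1 * u1) + b * (t2 * u2)) * c := by
    ring
  have e2 : t0 * (u0 * c) = (t0 * u0) * c := by ring
  rw [e1, e2]
  exact mul_le_mul_of_nonneg_right h hc

end PerspectiveLogDetAux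

/-- The perspective of the log-det mutual information is jointly concave: for a fixed
channel matrix `H`, the function `(t,Q) ↦ t · log₂ Re(det(I + (1/t) · H Q Hᴴ))` is concave
on `{(t,Q) : t > 0, Q positive semidefinite}` (a convex set of pairs of a real number and a
Hermitian matrix, since every positive semidefinite matrix is Hermitian). -/
theorem perspective_logdet_concaveOn (m n : ℕ) (H : Matrix (Fin m) (Fin n) ℂ) :
    ConcaveOn ℝ {p : ℝ × Matrix (Fin n) (Fin n) ℂ | 0 < p.1 ∧ p.2.PosSemidef}
      (fun p : ℝ × Matrix (Fin n) (Fin n) ℂ =>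
        p.1 * Real.logb 2
          (((1 : Matrix (Fin m) (Fin m) ℂ) + p.1⁻¹ • (H * p.2 * Hᴴ)).det.re)) := by
  constructor
  · -- convexity of the domain
    intro p hp q hq a b ha hb hab
    refine ⟨?_, ?_⟩
    · show 0 < (a • p + b • q).1
      simp only [Prod.fst_add, Prod.smul_fst, smul_eq_mul]
      rcases eq_or_lt_of_le ha with h | h
      · have hb1 : b = 1 := by linarith
        simpa [← h, hb1] using hq.1
      · have : 0 < a * p.1 := mul_pos h hp.1
        have : 0 ≤ b * q.1 := mul_nonneg hb hq.1.le
        linarith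
    · show ((a • p + b • q).2).PosSemidef
      simp only [Prod.snd_add, Prod.smul_snd]
      exact (pld_psd_real_smul hp.2 ha).add (pld_psd_real_smul hq.2 hb)
  · intro p hp q hq a b ha hb hab
    rcases eq_or_lt_of_le ha with h | ha'
    · have hb1 : b = 1 := by linarith
      simp [← h, hb1]
    rcases eq_or_lt_of_le hb with h | hb'
    · have ha1 : a = 1 := by linarith
      simp [← h, ha1]
    obtain ⟨ht1, hQ1⟩ := hp
    obtain ⟨ht2, hQ2⟩ := hq
    set t1 := p.1
    set t2 := q.1
    set Q1 := p.2
    set Q2 := q.2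
    have hmid1 : (a • p + b • q).1 = a * t1 + b * t2 := by
      simp [Prod.smul_fst, smul_eq_mul]
      rfl
    have hmid2 : (a • p + b • q).2 = a • Q1 + b • Q2 := by
      simp [Prod.smul_snd]
      rfl
    set t0 : ℝ := a * t1 + b * t2 with ht0def
    have ht0 : 0 < t0 := by
      have h1 : 0 < a * t1 := mul_pos ha' ht1
      have h2 : 0 < b * t2 := mul_pos hb' ht2
      linarith
    set Q0 := a • Q1 + b • Q2 with hQ0def
    have hQ0 : Q0.PosSemidef := (pld_psd_real_smul hQ1 ha).add (pld_psd_real_smul hQ2 hb)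
    set A1 := H * Q1 * Hᴴ with hA1def
    set A2 := H * Q2 * Hᴴ with hA2def
    set A0 := H * Q0 * Hᴴ with hA0def
    have hA0eq : A0 = a • A1 + b • A2 := by
      rw [hA0def, hQ0def, Matrix.mul_add, Matrix.add_mul, Matrix.mul_smul, Matrix.smul_mul,
        Matrix.mul_smul, Matrix.smul_mul]
    set X0 := (1 : Matrix (Fin m) (Fin m) ℂ) + t0⁻¹ • A0 with hX0def
    have hX0 : X0.PosDef := pld_X_posdef H ht0 hQ0
    have hdetX0 : IsUnit X0.det := isUnit_iff_ne_zero.2 hX0.det_pos.ne'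
    set S := X0⁻¹ with hSdef
    have hS : S.PosDef := hX0.inv
    have hSX0 : S * X0 = 1 := Matrix.nonsing_inv_mul X0 hdetX0
    -- the value of log det S
    have hdetS : S.det.re = (X0.det.re)⁻¹ := by
      have hX0re : X0.det = ((X0.det.re : ℝ) : ℂ) :=
        Complex.ext rfl (by simpa using pld_det_im_zero hX0)
      rw [hSdef, Matrix.det_nonsing_inv, Ring.inverse_eq_inv, hX0re, ← Complex.ofReal_inv,
        Complex.ofReal_re]
      simp
    have hlogS : Real.log S.det.re = - Real.log X0.det.re := by
      rw [hdetS, Real.log_inv]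
    -- the trace identity at the midpoint
    have htrace_mid : S.trace.re + t0⁻¹ * (S * A0).trace.re = m := by
      have := pld_trace_decomp S A0 t0
      rw [← hX0def, hSX0] at this
      rw [← this, Matrix.trace_one]
      simp
    -- linearity of trace in A
    have htraceA : (S * A0).trace.re = a * (S * A1).trace.re + b * (S * A2).trace.re := by
      rw [hA0eq, Matrix.mul_add, Matrix.mul_smul, Matrix.mul_smul, Matrix.trace_add,
        Matrix.trace_smul, Matrix.trace_smul, Complex.add_re]
      congr 1 <;> rw [Complex.real_smul, Complex.re_ofReal_mul]
    -- the two per-point inequalities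
    have hI1 := pld_point_ineq H ht1 hQ1 hS
    have hI2 := pld_point_ineq H ht2 hQ2 hS
    rw [← hA1def] at hI1
    rw [← hA2def] at hI2
    -- combine
    have hcomb : a * (t1 * Real.log (((1 : Matrix (Fin m) (Fin m) ℂ) + t1⁻¹ • A1).det.re)) +
        b * (t2 * Real.log (((1 : Matrix (Fin m) (Fin m) ℂ) + t2⁻¹ • A2).det.re)) ≤
        t0 * Real.log X0.det.re := by
      have h1 := mul_le_mul_of_nonneg_left hI1 ha
      have h2 := mul_le_mul_of_nonneg_left hI2 hb
      have hsum : a * (t1 * S.trace.re + (S * A1).trace.re - t1 * Real.log S.det.re - t1 * m) +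
          b * (t2 * S.trace.re + (S * A2).trace.re - t2 * Real.log S.det.re - t2 * m) =
          t0 * S.trace.re + (S * A0).trace.re - t0 * Real.log S.det.re - t0 * m := by
        rw [htraceA, ht0def]
        ring
      have hfinal : t0 * S.trace.re + (S * A0).trace.re - t0 * Real.log S.det.re - t0 * m =
          t0 * Real.log X0.det.re := by
        have hg : t0 * S.trace.re + (S * A0).trace.re = t0 * m := by
          have h4 : t0 * (S.trace.re + t0⁻¹ * (S * A0).trace.re) = t0 * m := by
            rw [htrace_mid]
          have h5 : t0 * (t0⁻¹ * (S * A0).trace.re) = (S * A0).trace.re := by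
            rw [← mul_assoc, mul_inv_cancel₀ ht0.ne', one_mul]
          rw [mul_add, h5] at h4
          exact h4
        rw [hlogS]
        linarith
      exact le_trans (add_le_add h1 h2) (le_of_eq (hsum.trans hfinal))
    -- convert natural log inequality to logb 2
    have hL : (0 : ℝ) < Real.log 2 := Real.log_pos one_lt_two
    simp only [smul_eq_mul, hmid1, hmid2, ← ht0def, ← hQ0def, ← hA0def, ← hA1def, ← hA2def,
      ← hX0def]
    rw [Real.logb, Real.logb, Real.logb, div_eq_mul_inv, div_eq_mul_inv, div_eq_mul_inv]
    exact pld_arith (inv_nonneg.2 hL.le) hcomb
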